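/- Let A and B be PASs over Set, and let G and H be combinatorially complete sets of nonempty subsets of A and B respectively. Equip A × B with the coordinatewise partial application, and for sets S, T of subsets of A, B write S×T = {U × V | U ∈ S, V ∈ T}. Then ⟨⟨G⟩×⟨H⟩⟩ = ⟨G×H⟩ as filters on A × B. -/

import Mathlib

open CategoryTheory

namespace PcaPaper

/-- A partial binary application on `A`. -/
abbrev PApp (A : Type) := A → A → Option A

variable {A B C : Type}

/-- Definedness of the application of inhabited subsets. -/
def SubDef (app : PApp A) (U V : Set A) : Prop :=
  ∀ a ∈ U, ∀ b ∈ V, (app a b).isSome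

/-- Application of subsets. -/
def SubApp (app : PApp A) (U V : Set A) : Set A :=
  {c | ∃ a ∈ U, ∃ b ∈ V, app a b = some c}

/-- Terms with `n` variables, built from variables by application. -/
inductive Term (n : ℕ) : Type
  | var : Fin n → Term n
  | op : Term n → Term n → Term n

/-- Evaluation of a term at a vector of elements, as a partial function. -/
def Term.eval (app : PApp A) : {n : ℕ} → Term n → (Fin n → A) → Option A
  | _, .var i, ρ => some (ρ i)
  | _, .op s t, ρ => (Term.eval app s ρ).bind fun x => (Term.eval app t ρ).bind fun y => app x y

/-- Evaluation of a term at a vector of subsets. -/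
def Term.subEval (app : PApp A) : {n : ℕ} → Term n → (Fin n → Set A) → Set A
  | _, .var i, ρ => ρ i
  | _, .op s t, ρ => SubApp app (Term.subEval app s ρ) (Term.subEval app t ρ)

/-- Definedness of the evaluation of a term at a vector of subsets. -/
def Term.subDef (app : PApp A) : {n : ℕ} → Term n → (Fin n → Set A) → Prop
  | _, .var _, _ => True
  | _, .op s t, ρ => Term.subDef app s ρ ∧ Term.subDef app t ρ ∧
      SubDef app (Term.subEval app s ρ) (Term.subEval app t ρ)

/-- `r · a 0 · … · a (k-1)`, associated to the left. -/
def appVec (app : PApp A) (r : A) : (k : ℕ) → (Fin k → A) → Option A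
  | 0, _ => some r
  | k + 1, a => (appVec app r k fun i => a i.castSucc).bind fun s => app s (a (Fin.last k))

/-- `U` realizes `λ x₀ … xₙ. t`. -/
def Realizes (app : PApp A) (U : Set A) {n : ℕ} (t : Term (n + 1)) : Prop :=
  ∀ r ∈ U, ∀ a : Fin (n + 1) → A,
    (appVec app r n fun i => a i.castSucc).isSome ∧
    ∀ b, Term.eval app t a = some b → appVec app r (n + 1) a = some b

/-- A filter of inhabited subsets on a partial applicative structure. -/
structure IsPcaFilter (app : PApp A) (φ : Set (Set A)) : Prop where
  nonempty : ∀ U ∈ φ, U.Nonempty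
  upward : ∀ U ∈ φ, ∀ V : Set A, U ⊆ V → V ∈ φ
  appClosed : ∀ U ∈ φ, ∀ V ∈ φ, SubDef app U V → SubApp app U V ∈ φ

/-- Combinatorial completeness of a set of subsets. -/
def CombComplete (app : PApp A) (G : Set (Set A)) : Prop :=
  ∀ (n : ℕ) (t : Term (n + 1)), ∃ U ∈ G, Realizes app U t

/-- The least filter containing `G`. -/
def genFilter (app : PApp A) (G : Set (Set A)) : Set (Set A) :=
  ⋂₀ {ψ | IsPcaFilter app ψ ∧ G ⊆ ψ}

/-- A (relative) PCA over the base category `Set`: a nonempty set with a partial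
binary application and a combinatorially complete filter of inhabited subsets. -/
structure PCA (A : Type) where
  app : PApp A
  nonemptyCarrier : Nonempty A
  filt : Set (Set A)
  isFilter : IsPcaFilter app filt
  complete : CombComplete app filt

/- ### Helper lemmas -/

lemma isSome_bind_left {α β : Type} {o : Option α} {f : α → Option β}
    (h : (o.bind f).isSome) : o.isSome := by
  cases o <;> simp_all

lemma appVec_two_pre (app : PApp A) (r u v x : A) :
    (appVec app r 2 fun i => (![u, v, x] : Fin 3 → A) i.castSucc)
      = (app r u).bind fun s => app s v := rfl

lemma appVec_three_cons (app : PApp A) (r u v x : A) :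
    appVec app r (2 + 1) ![u, v, x]
      = ((app r u).bind fun s => app s v).bind fun s => app s x := rfl

lemma eval_comp_term (app : PApp A) (u v x : A) :
    Term.eval app (Term.op (.var 1) (.op (.var 0) (.var 2))) ![u, v, x]
      = (app u x).bind fun y => app v y := by
  simp [Term.eval]

lemma eval_app2_term (app : PApp A) (u v x : A) :
    Term.eval app (Term.op (.op (.var 0) (.var 1)) (.var 2)) ![u, v, x]
      = (app u v).bind fun d => app d x := by
  simp [Term.eval]

lemma filt_nonempty (P : PCA A) : ∃ U, U ∈ P.filt := by
  obtain ⟨U, hU, -⟩ := P.complete 0 (.var 0)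
  exact ⟨U, hU⟩

lemma univ_mem_filt (P : PCA A) : (Set.univ : Set A) ∈ P.filt := by
  obtain ⟨U, hU⟩ := filt_nonempty P
  exact P.isFilter.upward U hU _ (Set.subset_univ U)

lemma exists_ireal (P : PCA A) :
    ∃ U ∈ P.filt, ∀ r ∈ U, ∀ a : A, P.app r a = some a := by
  obtain ⟨U, hU, hreal⟩ := P.complete 0 (.var 0)
  refine ⟨U, hU, fun r hr a => ?_⟩
  have h := (hreal r hr fun _ => a).2 a (by simp [Term.eval])
  simpa [appVec] using h

lemma realizes3_chain (P : PCA A) {T : Set A} {t : Term (2 + 1)}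
    (hreal : Realizes P.app T t) {r : A} (hr : r ∈ T) (u v : A) :
    ∃ s w, P.app r u = some s ∧ P.app s v = some w := by
  have h1 : ((P.app r u).bind fun s => P.app s v).isSome := by
    have h := (hreal r hr ![u, v, v]).1
    rwa [appVec_two_pre] at h
  cases hru : P.app r u with
  | none => rw [hru] at h1; simp at h1
  | some s =>
    rw [hru] at h1
    simp only [Option.bind_some] at h1
    obtain ⟨w, hw⟩ := Option.isSome_iff_exists.mp h1
    exact ⟨s, w, rfl, hw⟩

lemma exists_tracker3 (P : PCA A) (t : Term (2 + 1)) {U V : Set A}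
    (hU : U ∈ P.filt) (hV : V ∈ P.filt) :
    ∃ W ∈ P.filt, ∀ w ∈ W, ∃ u ∈ U, ∃ v ∈ V,
      ∀ x c : A, Term.eval P.app t ![u, v, x] = some c → P.app w x = some c := by
  obtain ⟨T, hT, hreal⟩ := P.complete 2 t
  have hdef1 : SubDef P.app T U := by
    intro r hr u _
    obtain ⟨s, w, hs, -⟩ := realizes3_chain P hreal hr u u
    simp [hs]
  have hTU := P.isFilter.appClosed T hT U hU hdef1
  have hdef2 : SubDef P.app (SubApp P.app T U) V := by
    rintro s ⟨r, hr, u, hu, hru⟩ v _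
    obtain ⟨s', w, hs', hw⟩ := realizes3_chain P hreal hr u v
    rw [hru] at hs'
    injection hs' with h
    subst h
    simp [hw]
  refine ⟨SubApp P.app (SubApp P.app T U) V,
    P.isFilter.appClosed _ hTU V hV hdef2, ?_⟩
  rintro w ⟨s, ⟨r, hr, u, hu, hru⟩, v, hv, hsv⟩
  refine ⟨u, hu, v, hv, fun x c hc => ?_⟩
  have h2 : appVec P.app r (2 + 1) ![u, v, x] = some c := (hreal r hr ![u, v, x]).2 c hc
  rw [appVec_three_cons, hru] at h2
  simp only [Option.bind_some] at h2
  rw [hsv] at h2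
  simpa using h2

/- ### Assemblies -/

/-- An assembly over a PCA `(A, φ)`. -/
structure Asm {A : Type} (P : PCA A) : Type 1 where
  carrier : Type
  E : carrier → A → Prop
  total : ∀ x, ∃ a, E x a

/-- `U` tracks the function `f` between (the carriers of) two assemblies. -/
def Tracks (P : PCA A) {X Y : Asm P} (U : Set A) (f : X.carrier → Y.carrier) : Prop :=
  ∀ x a r, X.E x a → r ∈ U → ∃ b, P.app r a = some b ∧ Y.E (f x) b

/-- The category of assemblies over a PCA. -/
instance asmCategory (P : PCA A) : Category (Asm P) where
  Hom X Y := {f : X.carrier → Y.carrier // ∃ U ∈ P.filt, Tracks P U f}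
  id X := ⟨fun x => x, by
    obtain ⟨U, hU, hI⟩ := exists_ireal P
    exact ⟨U, hU, fun x a r hx hr => ⟨a, hI r hr a, hx⟩⟩⟩
  comp {X Y Z} f g := ⟨fun x => g.1 (f.1 x), by
    obtain ⟨U, hU, hf⟩ := f.2
    obtain ⟨V, hV, hg⟩ := g.2
    obtain ⟨W, hW, hkey⟩ := exists_tracker3 P
      (Term.op (.var 1) (.op (.var 0) (.var 2))) hU hV
    refine ⟨W, hW, fun x a w hx hw => ?_⟩
    obtain ⟨u, hu, v, hv, key⟩ := hkey w hw
    obtain ⟨b, hb, hYb⟩ := hf x a u hx hu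
    obtain ⟨c, hc, hZc⟩ := hg (f.1 x) b v hYb hv
    refine ⟨c, key a c ?_, hZc⟩
    rw [eval_comp_term, hb]
    simpa using hc⟩
  id_comp f := Subtype.ext rfl
  comp_id f := Subtype.ext rfl
  assoc f g h := Subtype.ext rfl

/-- The global-sections-like functor `Γ : Asm(A,φ) ⥤ Set`. -/
def Gam (P : PCA A) : Asm P ⥤ Type where
  obj X := X.carrier
  map f := TypeCat.ofHom f.1
  map_id _ := rfl
  map_comp _ _ := rfl

/-- The constant-object assembly `∇ Y`. -/
def nablaObj (P : PCA A) (Y : Type) : Asm P where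
  carrier := Y
  E := fun _ _ => True
  total := fun _ => P.nonemptyCarrier.elim fun a => ⟨a, trivial⟩

/-- The functor `∇ : Set ⥤ Asm(A,φ)`. -/
def Nab (P : PCA A) : Type ⥤ Asm P where
  obj Y := nablaObj P Y
  map {Y Z} f := ⟨f, by
    obtain ⟨U, hU, hI⟩ := exists_ireal P
    exact ⟨U, hU, fun y a r _ hr => ⟨a, hI r hr a, trivial⟩⟩⟩
  map_id _ := Subtype.ext rfl
  map_comp _ _ := Subtype.ext rfl

/- ### Applicative morphisms -/

/-- The image of a subset under a relation. -/
def relImage (f : A → B → Prop) (V : Set A) : Set B :=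
  {b | ∃ a ∈ V, f a b}

/-- `U` tracks the relation `f` as an applicative (pre)morphism. -/
def Tracks₂ (appA : PApp A) (appB : PApp B) (U : Set B) (f : A → B → Prop) : Prop :=
  ∀ a a' c, appA a a' = some c → ∀ b b', f a b → f a' b' → ∀ r ∈ U,
    ∃ d e, appB r b = some d ∧ appB d b' = some e ∧ f c e

/-- `f ⊆ A × B` is an applicative morphism `(A,φ) → (B,ψ)`. -/
structure IsAppMor (appA : PApp A) (φ : Set (Set A)) (appB : PApp B) (ψ : Set (Set B))
    (f : A → B → Prop) : Prop where
  total : ∀ a, ∃ b, f a b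
  tracked : ∃ U ∈ ψ, Tracks₂ appA appB U f
  image : ∀ V ∈ φ, relImage f V ∈ ψ

/-- The preorder `f ≤ f'` on relations `A × B`, relative to `(B,ψ)`. -/
def RelLe (appB : PApp B) (ψ : Set (Set B)) (f f' : A → B → Prop) : Prop :=
  ∃ U ∈ ψ, ∀ a b, f a b → ∀ r ∈ U, ∃ c, appB r b = some c ∧ f' a c

/-- Relational composition: `(RelComp g f) a c ↔ ∃ b, f a b ∧ g b c`. -/
def RelComp (g : B → C → Prop) (f : A → B → Prop) : A → C → Prop :=
  fun a c => ∃ b, f a b ∧ g b c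

/-- The diagonal (identity) relation `δ_A`. -/
def relId (A : Type) : A → A → Prop := fun a b => a = b

/- ### The functor Asm(f) induced by an applicative morphism -/

/-- The action of an applicative morphism on an assembly. -/
def asmObj (P : PCA A) (Q : PCA B) (f : A → B → Prop) (htot : ∀ a, ∃ b, f a b)
    (X : Asm P) : Asm Q where
  carrier := X.carrier
  E := fun x b => ∃ a, X.E x a ∧ f a b
  total := fun x => by
    obtain ⟨a, ha⟩ := X.total x
    obtain ⟨b, hb⟩ := htot a
    exact ⟨b, a, ha, hb⟩

lemma tracks_asmMap {P : PCA A} {Q : PCA B} {f : A → B → Prop}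
    (hf : IsAppMor P.app P.filt Q.app Q.filt f) {X Y : Asm P}
    (g : X.carrier → Y.carrier) (hg : ∃ U ∈ P.filt, Tracks P U g) :
    ∃ W ∈ Q.filt,
      Tracks Q (X := asmObj P Q f hf.total X) (Y := asmObj P Q f hf.total Y) W g := by
  obtain ⟨U, hU, hgU⟩ := hg
  obtain ⟨T, hT, hfT⟩ := hf.tracked
  have hfU : relImage f U ∈ Q.filt := hf.image U hU
  obtain ⟨W, hW, hkey⟩ := exists_tracker3 Q
    (Term.op (.op (.var 0) (.var 1)) (.var 2)) hT hfU
  refine ⟨W, hW, ?_⟩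
  rintro x b w ⟨a, hxa, hab⟩ hw
  obtain ⟨v, hv, y, hy, key⟩ := hkey w hw
  obtain ⟨u, hu, huy⟩ := hy
  obtain ⟨a', ha', hEa'⟩ := hgU x a u hxa hu
  obtain ⟨d, e, hd, he, hfe⟩ := hfT u a a' ha' y b huy hab v hv
  refine ⟨e, key b e ?_, a', hEa', hfe⟩
  rw [eval_app2_term, hd]
  simpa using he

/-- The functor `Asm(f) : Asm(A,φ) ⥤ Asm(B,ψ)` induced by an applicative morphism. -/
def asmFunctor {P : PCA A} {Q : PCA B} {f : A → B → Prop}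
    (hf : IsAppMor P.app P.filt Q.app Q.filt f) : Asm P ⥤ Asm Q where
  obj X := asmObj P Q f hf.total X
  map {X Y} g := ⟨g.1, tracks_asmMap hf g.1 g.2⟩
  map_id _ := Subtype.ext rfl
  map_comp _ _ := Subtype.ext rfl
/- ### Products of PASs -/

/-- Coordinatewise partial application on `A × B`. -/
def prodApp (appA : PApp A) (appB : PApp B) : PApp (A × B) := fun p q =>
  (appA p.1 q.1).bind fun x => (appB p.2 q.2).bind fun y => some (x, y)

/-- The set `φ × ψ` of rectangles `U ×ˢ V` with `U ∈ φ` and `V ∈ ψ`. -/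
def prodFiltSet (φ : Set (Set A)) (ψ : Set (Set B)) : Set (Set (A × B)) :=
  {W | ∃ U ∈ φ, ∃ V ∈ ψ, W = U ×ˢ V}

/-- The filter `⟨φ × ψ⟩` of the pseudocoproduct of two PCAs. -/
def prodFilt (P : PCA A) (Q : PCA B) : Set (Set (A × B)) :=
  genFilter (prodApp P.app Q.app) (prodFiltSet P.filt Q.filt)

/- ### Quasi-surjectivity and computational density -/

/-- A quasi-surjective applicative morphism. -/
def QuasiSurjective (P : PCA A) (Q : PCA B) (f : A → B → Prop) : Prop :=
  ∃ N ∈ Q.filt, ∀ U ∈ Q.filt, ∃ V ∈ P.filt,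
    ∀ n ∈ N, ∀ b ∈ relImage f V, ∃ c, Q.app n b = some c ∧ c ∈ U

/-- A computationally dense applicative morphism. -/
def CompDense (P : PCA A) (Q : PCA B) (f : A → B → Prop) : Prop :=
  ∃ M ∈ Q.filt, ∀ U ∈ Q.filt, ∃ V ∈ P.filt,
    (∀ r ∈ V, ∀ a : A, (P.app r a).isSome) ∧
    (∀ r ∈ V, ∀ a a', P.app r a = some a' →
      (∀ u ∈ U, ∀ b, f a b → (Q.app u b).isSome) →
      ∀ m ∈ M, ∀ b', f a' b' →
        ∃ c, Q.app m b' = some c ∧ ∃ u ∈ U, ∃ b'', f a b'' ∧ Q.app u b'' = some c)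

/- ### Slicing: fiberwise filters over an assembly -/

/-- Fiberwise definedness of the application of two subsets of `I × A`. -/
def fibSubDef (app : PApp A) {I : Type} (U V : Set (I × A)) : Prop :=
  ∀ i r s, (i, r) ∈ U → (i, s) ∈ V → (app r s).isSome

/-- Fiberwise application of two subsets of `I × A`. -/
def fibSubApp (app : PApp A) {I : Type} (U V : Set (I × A)) : Set (I × A) :=
  {p | ∃ r s, (p.1, r) ∈ U ∧ (p.1, s) ∈ V ∧ app r s = some p.2}

/-- A fiberwise filter over `I`. -/
structure IsFibFilter (app : PApp A) (I : Type) (Ψ : Set (Set (I × A))) : Prop where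
  inhab : ∀ U ∈ Ψ, ∀ i : I, ∃ a, (i, a) ∈ U
  upward : ∀ U ∈ Ψ, ∀ V : Set (I × A), U ⊆ V → V ∈ Ψ
  appClosed : ∀ U ∈ Ψ, ∀ V ∈ Ψ, fibSubDef app U V → fibSubApp app U V ∈ Ψ

/-- The filter `φ_I` of the slice PCA over an assembly `I`: the least fiberwise filter
containing `E_I` and all sets `|I| × V` for `V ∈ φ`. -/
def sliceFilt (P : PCA A) (I : Asm P) : Set (Set (I.carrier × A)) :=
  ⋂₀ {Ψ | IsFibFilter P.app I.carrier Ψ ∧ {p : I.carrier × A | I.E p.1 p.2} ∈ Ψ ∧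
      ∀ V ∈ P.filt, {p : I.carrier × A | p.2 ∈ V} ∈ Ψ}

lemma sliceFilt_upward {P : PCA A} {I : Asm P} {U V : Set (I.carrier × A)}
    (hU : U ∈ sliceFilt P I) (hUV : U ⊆ V) : V ∈ sliceFilt P I := by
  rw [sliceFilt, Set.mem_sInter] at hU ⊢
  intro Ψ hΨ
  exact hΨ.1.upward U (hU Ψ hΨ) V hUV

lemma sliceFilt_appClosed {P : PCA A} {I : Asm P} {U V : Set (I.carrier × A)}
    (hU : U ∈ sliceFilt P I) (hV : V ∈ sliceFilt P I) (hdef : fibSubDef P.app U V) :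
    fibSubApp P.app U V ∈ sliceFilt P I := by
  rw [sliceFilt, Set.mem_sInter] at hU hV ⊢
  intro Ψ hΨ
  exact hΨ.1.appClosed U (hU Ψ hΨ) V (hV Ψ hΨ) hdef

lemma base_mem_sliceFilt {P : PCA A} {I : Asm P} {V : Set A} (hV : V ∈ P.filt) :
    {p : I.carrier × A | p.2 ∈ V} ∈ sliceFilt P I := by
  rw [sliceFilt, Set.mem_sInter]
  intro Ψ hΨ
  exact hΨ.2.2 V hV

lemma EI_mem_sliceFilt (P : PCA A) (I : Asm P) :
    {p : I.carrier × A | I.E p.1 p.2} ∈ sliceFilt P I := by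
  rw [sliceFilt, Set.mem_sInter]
  intro Ψ hΨ
  exact hΨ.2.1

lemma exists_fib_tracker3 (P : PCA A) (I : Asm P) (t : Term (2 + 1))
    {U V : Set (I.carrier × A)} (hU : U ∈ sliceFilt P I) (hV : V ∈ sliceFilt P I) :
    ∃ W ∈ sliceFilt P I, ∀ i w, (i, w) ∈ W → ∃ u v, (i, u) ∈ U ∧ (i, v) ∈ V ∧
      ∀ x c : A, Term.eval P.app t ![u, v, x] = some c → P.app w x = some c := by
  obtain ⟨T, hT, hreal⟩ := P.complete 2 t
  have hT' : {p : I.carrier × A | p.2 ∈ T} ∈ sliceFilt P I := base_mem_sliceFilt hT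
  have hdef1 : fibSubDef P.app {p : I.carrier × A | p.2 ∈ T} U := by
    intro i r s hr _
    obtain ⟨s', w', h1, -⟩ := realizes3_chain P hreal hr s s
    simp [h1]
  have h1mem := sliceFilt_appClosed hT' hU hdef1
  have hdef2 : fibSubDef P.app (fibSubApp P.app {p : I.carrier × A | p.2 ∈ T} U) V := by
    rintro i s v ⟨r, u, hr, hu, hru⟩ _
    obtain ⟨s', w', hs', hw'⟩ := realizes3_chain P hreal hr u v
    rw [hru] at hs'
    injection hs' with h
    subst h
    simp [hw']
  refine ⟨_, sliceFilt_appClosed h1mem hV hdef2, ?_⟩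
  rintro i w ⟨s, v, ⟨r, u, hr, hu, hru⟩, hv, hsv⟩
  refine ⟨u, v, hu, hv, fun x c hc => ?_⟩
  have h2 : appVec P.app r (2 + 1) ![u, v, x] = some c := (hreal r hr ![u, v, x]).2 c hc
  rw [appVec_three_cons, hru] at h2
  simp only [Option.bind_some] at h2
  rw [hsv] at h2
  simpa using h2

/- ### The category of assemblies over the slice PCA `(A,φ)/I` -/

/-- Assemblies over the slice PCA `(A,φ)/I`. -/
structure SliceAsm (P : PCA A) (I : Asm P) : Type 1 where
  carrier : Type
  k : carrier → I.carrier
  E : carrier → A → Prop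
  total : ∀ x, ∃ a, E x a

/-- Fiberwise tracking for morphisms of assemblies over `(A,φ)/I`. -/
def SliceTracks (P : PCA A) (I : Asm P) {X Y : SliceAsm P I} (U : Set (I.carrier × A))
    (f : X.carrier → Y.carrier) : Prop :=
  ∀ x a r, X.E x a → (X.k x, r) ∈ U → ∃ b, P.app r a = some b ∧ Y.E (f x) b

instance sliceAsmCategory (P : PCA A) (I : Asm P) : Category (SliceAsm P I) where
  Hom X Y := {f : X.carrier → Y.carrier //
    (∀ x, Y.k (f x) = X.k x) ∧ ∃ U ∈ sliceFilt P I, SliceTracks P I U f}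
  id X := ⟨fun x => x, fun _ => rfl, by
    obtain ⟨U, hU, hI⟩ := exists_ireal P
    exact ⟨{p | p.2 ∈ U}, base_mem_sliceFilt hU,
      fun x a r hx hr => ⟨a, hI r hr a, hx⟩⟩⟩
  comp {X Y Z} f g := ⟨fun x => g.1 (f.1 x), fun x => (g.2.1 (f.1 x)).trans (f.2.1 x), by
    obtain ⟨U, hU, hf⟩ := f.2.2
    obtain ⟨V, hV, hg⟩ := g.2.2
    obtain ⟨W, hW, hkey⟩ := exists_fib_tracker3 P I
      (Term.op (.var 1) (.op (.var 0) (.var 2))) hU hV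
    refine ⟨W, hW, fun x a w hx hw => ?_⟩
    obtain ⟨u, v, hu, hv, key⟩ := hkey (X.k x) w hw
    obtain ⟨b, hb, hYb⟩ := hf x a u hx hu
    have hv' : (Y.k (f.1 x), v) ∈ V := by rw [f.2.1 x]; exact hv
    obtain ⟨c, hc, hZc⟩ := hg (f.1 x) b v hYb hv'
    refine ⟨c, key a c ?_, hZc⟩
    rw [eval_comp_term, hb]
    simpa using hc⟩
  id_comp f := Subtype.ext rfl
  comp_id f := Subtype.ext rfl
  assoc f g h := Subtype.ext rfl

/- ### Families of assemblies (products of PCAs) -/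

/-- The category of families of assemblies over a family of PCAs, with uniformly
tracked families of morphisms; this is the category of assemblies over the product
PCA of the family, taken over the product of the base categories. -/
structure FamAsm {I : Type} {A : I → Type} (P : ∀ i, PCA (A i)) : Type 1 where
  obj : ∀ i, Asm (P i)

instance famAsmCategory {I : Type} {A : I → Type} (P : ∀ i, PCA (A i)) :
    Category (FamAsm P) where
  Hom X Y := {f : ∀ i, (X.obj i).carrier → (Y.obj i).carrier //
    ∃ U : ∀ i, Set (A i), (∀ i, U i ∈ (P i).filt) ∧ ∀ i, Tracks (P i) (U i) (f i)}
  id X := ⟨fun i x => x, by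
    choose U hU using fun i => exists_ireal (P i)
    exact ⟨U, fun i => (hU i).1, fun i x a r hx hr => ⟨a, (hU i).2 r hr a, hx⟩⟩⟩
  comp {X Y Z} f g := ⟨fun i x => g.1 i (f.1 i x), by
    obtain ⟨U, hU, hf⟩ := f.2
    obtain ⟨V, hV, hg⟩ := g.2
    choose W hW using fun i => exists_tracker3 (P i)
      (Term.op (.var 1) (.op (.var 0) (.var 2))) (hU i) (hV i)
    refine ⟨W, fun i => (hW i).1, fun i x a w hx hw => ?_⟩
    obtain ⟨u, hu, v, hv, key⟩ := (hW i).2 w hw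
    obtain ⟨b, hb, hYb⟩ := hf i x a u hx hu
    obtain ⟨c, hc, hZc⟩ := hg i (f.1 i x) b v hYb hv
    refine ⟨c, key a c ?_, hZc⟩
    rw [eval_comp_term, hb]
    simpa using hc⟩
  id_comp f := Subtype.ext rfl
  comp_id f := Subtype.ext rfl
  assoc f g h := Subtype.ext rfl

/- ### Auxiliary development for statement 6 -/

lemma term_zero_elim (t : Term 0) : False := by
  induction t with
  | var i => exact i.elim0
  | op s t ihs iht => exact ihs


@[simp] lemma subEval_var (app : PApp A) {n : ℕ} (i : Fin n) (ρ : Fin n → Set A) :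
    Term.subEval app (.var i) ρ = ρ i := by simp [Term.subEval]
@[simp] lemma subEval_op (app : PApp A) {n : ℕ} (s t : Term n) (ρ : Fin n → Set A) :
    Term.subEval app (.op s t) ρ
      = SubApp app (Term.subEval app s ρ) (Term.subEval app t ρ) := by simp [Term.subEval]
@[simp] lemma subDef_var (app : PApp A) {n : ℕ} (i : Fin n) (ρ : Fin n → Set A) :
    Term.subDef app (.var i) ρ = True := by simp [Term.subDef]
@[simp] lemma subDef_op (app : PApp A) {n : ℕ} (s t : Term n) (ρ : Fin n → Set A) :
    Term.subDef app (.op s t) ρ = (Term.subDef app s ρ ∧ Term.subDef app t ρ ∧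
      SubDef app (Term.subEval app s ρ) (Term.subEval app t ρ)) := by simp [Term.subDef]
@[simp] lemma eval_var (app : PApp A) {n : ℕ} (i : Fin n) (a : Fin n → A) :
    Term.eval app (.var i) a = some (a i) := by simp [Term.eval]
@[simp] lemma eval_op (app : PApp A) {n : ℕ} (s t : Term n) (a : Fin n → A) :
    Term.eval app (.op s t) a
      = (Term.eval app s a).bind fun x => (Term.eval app t a).bind fun y => app x y := by
  simp [Term.eval]

/-- Renaming of variables in a term. -/
def Term.rename {n m : ℕ} (f : Fin n → Fin m) : Term n → Term m
  | .var i => .var (f i)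
  | .op s t => .op (s.rename f) (t.rename f)

lemma subEval_rename (app : PApp A) {n m : ℕ} (f : Fin n → Fin m) (t : Term n)
    (ρ : Fin m → Set A) :
    Term.subEval app (t.rename f) ρ = Term.subEval app t (fun i => ρ (f i)) := by
  induction t with
  | var i => simp [Term.rename]
  | op s t ihs iht => simp [Term.rename, ihs, iht]

lemma subDef_rename (app : PApp A) {n m : ℕ} (f : Fin n → Fin m) (t : Term n)
    (ρ : Fin m → Set A) :
    Term.subDef app (t.rename f) ρ ↔ Term.subDef app t (fun i => ρ (f i)) := by
  induction t with
  | var i => simp [Term.rename]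
  | op s t ihs iht => simp [Term.rename, ihs, iht, subEval_rename]

lemma eval_rename (app : PApp A) {n m : ℕ} (f : Fin n → Fin m) (t : Term n)
    (a : Fin m → A) :
    Term.eval app (t.rename f) a = Term.eval app t (fun i => a (f i)) := by
  induction t with
  | var i => simp [Term.rename]
  | op s t ihs iht => simp [Term.rename, ihs, iht]

lemma eval_mem_subEval (app : PApp A) {n : ℕ} (t : Term n) (ρ : Fin n → Set A)
    (a : Fin n → A) (hdef : Term.subDef app t ρ) (ha : ∀ i, a i ∈ ρ i) :
    ∃ u ∈ Term.subEval app t ρ, Term.eval app t a = some u := by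
  induction t with
  | var i => exact ⟨a i, by simpa using ha i, by simp⟩
  | op s t ihs iht =>
    rw [subDef_op] at hdef
    obtain ⟨h1, h2, h3⟩ := hdef
    obtain ⟨u, hu, hev1⟩ := ihs h1
    obtain ⟨v, hv, hev2⟩ := iht h2
    obtain ⟨w, hw⟩ := Option.isSome_iff_exists.mp (h3 u hu v hv)
    exact ⟨w, by rw [subEval_op]; exact ⟨u, hu, v, hv, hw⟩, by simp [hev1, hev2, hw]⟩

lemma subEval_nonempty (app : PApp A) {n : ℕ} (t : Term n) (ρ : Fin n → Set A)
    (hdef : Term.subDef app t ρ) (hne : ∀ i, (ρ i).Nonempty) :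
    (Term.subEval app t ρ).Nonempty := by
  obtain ⟨u, hu, -⟩ := eval_mem_subEval app t ρ (fun i => (hne i).some) hdef
    (fun i => (hne i).some_mem)
  exact ⟨u, hu⟩

lemma SubDef_mono {app : PApp A} {U V U' V' : Set A} (h : SubDef app U V)
    (hU : U' ⊆ U) (hV : V' ⊆ V) : SubDef app U' V' :=
  fun a ha b hb => h a (hU ha) b (hV hb)

lemma SubApp_mono {app : PApp A} {U V U' V' : Set A} (hU : U' ⊆ U) (hV : V' ⊆ V) :
    SubApp app U' V' ⊆ SubApp app U V := by
  rintro c ⟨a, ha, b, hb, hab⟩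
  exact ⟨a, hU ha, b, hV hb, hab⟩

/-- The set of supersets of evaluations of terms at vectors of `G`-sets. -/
def TermGen (app : PApp A) (G : Set (Set A)) : Set (Set A) :=
  {W | ∃ (n : ℕ) (t : Term n) (ρ : Fin n → Set A), (∀ i, ρ i ∈ G) ∧
    Term.subDef app t ρ ∧ Term.subEval app t ρ ⊆ W}

lemma subset_termGen (app : PApp A) (G : Set (Set A)) : G ⊆ TermGen app G :=
  fun U hU => ⟨1, .var 0, fun _ => U, fun _ => hU, by simp, by simp⟩

lemma isFilter_termGen (app : PApp A) {G : Set (Set A)}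
    (hGne : ∀ U ∈ G, U.Nonempty) : IsPcaFilter app (TermGen app G) := by
  constructor
  · rintro U ⟨n, t, ρ, hρ, hdef, hsub⟩
    exact (subEval_nonempty app t ρ hdef (fun i => hGne _ (hρ i))).mono hsub
  · rintro U ⟨n, t, ρ, hρ, hdef, hsub⟩ V hUV
    exact ⟨n, t, ρ, hρ, hdef, hsub.trans hUV⟩
  · rintro U ⟨n, t, ρ, hρ, hdeft, hsubt⟩ V ⟨m, s, σ, hσ, hdefs, hsubs⟩ hSD
    have hfρ : (fun i => Fin.append ρ σ (Fin.castAdd m i)) = ρ :=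
      funext fun i => Fin.append_left ρ σ i
    have hfσ : (fun i => Fin.append ρ σ (Fin.natAdd n i)) = σ :=
      funext fun i => Fin.append_right ρ σ i
    have het : Term.subEval app (t.rename (Fin.castAdd m)) (Fin.append ρ σ)
        = Term.subEval app t ρ := by rw [subEval_rename, hfρ]
    have hes : Term.subEval app (s.rename (Fin.natAdd n)) (Fin.append ρ σ)
        = Term.subEval app s σ := by rw [subEval_rename, hfσ]
    refine ⟨n + m, .op (t.rename (Fin.castAdd m)) (s.rename (Fin.natAdd n)),
      Fin.append ρ σ, ?_, ?_, ?_⟩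
    · intro i
      refine Fin.addCases (motive := fun i => Fin.append ρ σ i ∈ G) ?_ ?_ i
      · intro i; rw [Fin.append_left]; exact hρ i
      · intro i; rw [Fin.append_right]; exact hσ i
    · rw [subDef_op]
      refine ⟨?_, ?_, ?_⟩
      · rw [subDef_rename, hfρ]; exact hdeft
      · rw [subDef_rename, hfσ]; exact hdefs
      · rw [het, hes]; exact SubDef_mono hSD hsubt hsubs
    · rw [subEval_op, het, hes]
      exact SubApp_mono hsubt hsubs

lemma subset_genFilter (app : PApp A) (G : Set (Set A)) : G ⊆ genFilter app G :=
  fun U hU => Set.mem_sInter.2 fun _ hψ => hψ.2 hU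

lemma genFilter_le {app : PApp A} {G ψ : Set (Set A)} (hψ : IsPcaFilter app ψ)
    (hsub : G ⊆ ψ) : genFilter app G ⊆ ψ :=
  fun _ hU => Set.mem_sInter.1 hU ψ ⟨hψ, hsub⟩

lemma isFilter_allNE (app : PApp A) : IsPcaFilter app {U : Set A | U.Nonempty} := by
  constructor
  · exact fun U hU => hU
  · exact fun U hU V hUV => hU.mono hUV
  · rintro U ⟨a, ha⟩ V ⟨b, hb⟩ hdef
    obtain ⟨c, hc⟩ := Option.isSome_iff_exists.mp (hdef a ha b hb)
    exact ⟨c, a, ha, b, hb, hc⟩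

lemma genFilter_nonempty {app : PApp A} {G : Set (Set A)}
    (hne : ∀ U ∈ G, U.Nonempty) {U : Set A} (hU : U ∈ genFilter app G) :
    U.Nonempty :=
  genFilter_le (isFilter_allNE app) hne hU

lemma isFilter_genFilter {app : PApp A} {G : Set (Set A)}
    (hne : ∀ U ∈ G, U.Nonempty) : IsPcaFilter app (genFilter app G) := by
  constructor
  · exact fun U hU => genFilter_nonempty hne hU
  · intro U hU V hUV
    exact Set.mem_sInter.2 fun ψ hψ =>
      hψ.1.upward U (Set.mem_sInter.1 hU ψ hψ) V hUV
  · intro U hU V hV hdef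
    exact Set.mem_sInter.2 fun ψ hψ =>
      hψ.1.appClosed U (Set.mem_sInter.1 hU ψ hψ) V (Set.mem_sInter.1 hV ψ hψ) hdef

lemma appVec_succ (app : PApp A) (r : A) (j : ℕ) (a : Fin (j + 1) → A) :
    appVec app r (j + 1) a
      = (appVec app r j fun i => a i.castSucc).bind fun s => app s (a (Fin.last j)) :=
  rfl

lemma appVec_isSome_le (app : PApp A) (r : A) :
    ∀ (k : ℕ) (a : Fin k → A) (j : ℕ) (h : j ≤ k), (appVec app r k a).isSome →
      (appVec app r j fun i => a ⟨i.1, lt_of_lt_of_le i.2 h⟩).isSome := by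
  intro k
  induction k with
  | zero =>
    intro a j h ha
    obtain rfl := Nat.le_zero.mp h
    exact ha
  | succ k ih =>
    intro a j h ha
    rcases eq_or_lt_of_le h with rfl | h'
    · exact ha
    · have h'' : j ≤ k := Nat.lt_succ_iff.mp h'
      have hpre : (appVec app r k fun i => a i.castSucc).isSome := by
        rw [appVec_succ] at ha; exact isSome_bind_left ha
      exact ih (fun i => a i.castSucc) j h'' hpre

lemma appVec_prod (appA : PApp A) (appB : PApp B) (r : A × B) :
    ∀ (j : ℕ) (v : Fin j → A × B),
      appVec (prodApp appA appB) r j v =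
        (appVec appA r.1 j fun i => (v i).1).bind fun x =>
          (appVec appB r.2 j fun i => (v i).2).bind fun y => some (x, y) := by
  intro j
  induction j with
  | zero => intro v; simp [appVec]
  | succ j ih =>
    intro v
    rw [appVec_succ, ih, appVec_succ, appVec_succ]
    cases appVec appA r.1 j fun i => (v i.castSucc).1 <;>
      cases appVec appB r.2 j fun i => (v i.castSucc).2 <;>
      simp [prodApp]

lemma appVec_prod_eq_some (appA : PApp A) (appB : PApp B) (r : A × B) (j : ℕ)
    (v : Fin j → A × B) (p : A × B)
    (h : appVec (prodApp appA appB) r j v = some p) :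
    appVec appA r.1 j (fun i => (v i).1) = some p.1 ∧
      appVec appB r.2 j (fun i => (v i).2) = some p.2 := by
  rw [appVec_prod] at h
  rcases hx : appVec appA r.1 j fun i => (v i).1 with _ | x <;> rw [hx] at h
  · simp at h
  rcases hy : appVec appB r.2 j fun i => (v i).2 with _ | y <;> rw [hy] at h
  · simp at h
  simp only [Option.bind_some, Option.some.injEq] at h
  exact ⟨by simp [hx, ← h], by simp [hy, ← h]⟩

/-- The chain of iterated subset applications. -/
def chain (app : PApp A) (C0 : Set A) (W : ℕ → Set A) : ℕ → Set A
  | 0 => C0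
  | j + 1 => SubApp app (chain app C0 W j) (W j)

/-- The key lemma: a rectangle of generated-filter sets lies in the filter generated
by the rectangles. -/
lemma rect_mem_genFilter {A B : Type} (appA : PApp A) (appB : PApp B)
    {G : Set (Set A)} {H : Set (Set B)}
    (hGne : ∀ U ∈ G, U.Nonempty) (hHne : ∀ V ∈ H, V.Nonempty)
    (hG : CombComplete appA G) (hH : CombComplete appB H)
    {U : Set A} {V : Set B}
    (hU : U ∈ genFilter appA G) (hV : V ∈ genFilter appB H) :
    U ×ˢ V ∈ genFilter (prodApp appA appB) (prodFiltSet G H) := by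
  -- extract term presentations of `U` and `V`
  obtain ⟨n, t, ρ, hρG, hρdef, hρsub⟩ :=
    genFilter_le (isFilter_termGen appA hGne) (subset_termGen appA G) hU
  obtain ⟨m, s, σ, hσH, hσdef, hσsub⟩ :=
    genFilter_le (isFilter_termGen appB hHne) (subset_termGen appB H) hV
  rcases n with _ | n₀
  · exact (term_zero_elim t).elim
  rcases m with _ | m₀
  · exact (term_zero_elim s).elim
  set k : ℕ := n₀ + m₀ + 1 with hk
  have hkn : n₀ + 1 ≤ k + 1 := by omega
  -- variable embeddings and padded vectors of sets
  set f : Fin (n₀ + 1) → Fin (k + 1) := fun i => ⟨i.1, by omega⟩ with hf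
  set g : Fin (m₀ + 1) → Fin (k + 1) := fun j => ⟨n₀ + 1 + j.1, by omega⟩ with hg
  set ρ' : Fin (k + 1) → Set A :=
    fun i => ρ ⟨min i.1 n₀, Nat.lt_succ_of_le (Nat.min_le_right _ _)⟩ with hρ'
  set σ' : Fin (k + 1) → Set B :=
    fun i => σ ⟨min (i.1 - (n₀ + 1)) m₀, Nat.lt_succ_of_le (Nat.min_le_right _ _)⟩ with hσ'
  have hρ'G : ∀ i, ρ' i ∈ G := fun i => hρG _
  have hσ'H : ∀ i, σ' i ∈ H := fun i => hσH _
  have hρ'f : ∀ i, ρ' (f i) = ρ i := by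
    intro i
    refine congrArg ρ (Fin.ext ?_)
    have := i.isLt
    show min i.1 n₀ = i.1
    omega
  have hσ'g : ∀ j, σ' (g j) = σ j := by
    intro j
    refine congrArg σ (Fin.ext ?_)
    have := j.isLt
    show min (n₀ + 1 + j.1 - (n₀ + 1)) m₀ = j.1
    omega
  -- realizers
  obtain ⟨RA, hRAG, hrealA⟩ := hG k (t.rename f)
  obtain ⟨RB, hRBH, hrealB⟩ := hH k (s.rename g)
  -- full application along a padded vector lands in `U` (resp. `V`)
  have fullA : ∀ r ∈ RA, ∀ a : Fin (k + 1) → A, (∀ i, a i ∈ ρ' i) →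
      ∃ u ∈ U, appVec appA r (k + 1) a = some u := by
    intro r hr a ha
    have ha' : ∀ i, a (f i) ∈ ρ i := fun i => (hρ'f i) ▸ ha (f i)
    obtain ⟨u, hu, hev⟩ := eval_mem_subEval appA t ρ (fun i => a (f i)) hρdef ha'
    have hev' : Term.eval appA (t.rename f) a = some u := by
      rw [eval_rename]; exact hev
    exact ⟨u, hρsub hu, (hrealA r hr a).2 u hev'⟩
  have fullB : ∀ r ∈ RB, ∀ b : Fin (k + 1) → B, (∀ i, b i ∈ σ' i) →
      ∃ v ∈ V, appVec appB r (k + 1) b = some v := by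
    intro r hr b hb
    have hb' : ∀ j, b (g j) ∈ σ j := fun j => (hσ'g j) ▸ hb (g j)
    obtain ⟨v, hv, hev⟩ := eval_mem_subEval appB s σ (fun j => b (g j)) hσdef hb'
    have hev' : Term.eval appB (s.rename g) b = some v := by
      rw [eval_rename]; exact hev
    exact ⟨v, hσsub hv, (hrealB r hr b).2 v hev'⟩
  -- the rectangles
  set Wrect : Fin (k + 1) → Set (A × B) := fun i => ρ' i ×ˢ σ' i with hWrect
  have hWmem : ∀ i, Wrect i ∈ prodFiltSet G H :=
    fun i => ⟨ρ' i, hρ'G i, σ' i, hσ'H i, rfl⟩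
  have hWne : ∀ i, (Wrect i).Nonempty :=
    fun i => (hGne _ (hρ'G i)).prod (hHne _ (hσ'H i))
  choose d hd using hWne
  set Wn : ℕ → Set (A × B) :=
    fun j => Wrect ⟨min j k, Nat.lt_succ_of_le (Nat.min_le_right j k)⟩ with hWn
  have hWneq : ∀ (j : ℕ) (h : j < k + 1), Wn j = Wrect ⟨j, h⟩ := by
    intro j h
    exact congrArg Wrect (Fin.ext (Nat.min_eq_left (Nat.lt_succ_iff.mp h)))
  -- work in an arbitrary filter containing the rectangles
  refine Set.mem_sInter.2 fun ψ hψ => ?_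
  obtain ⟨hfil, hsub⟩ := hψ
  set papp := prodApp appA appB with hpapp
  have key : ∀ j, ∀ hj : j ≤ k + 1, chain papp (RA ×ˢ RB) Wn j ∈ ψ ∧
      ∀ p ∈ chain papp (RA ×ˢ RB) Wn j, ∃ ra ∈ RA, ∃ rb ∈ RB,
        ∃ c : Fin (k + 1) → A × B, (∀ i, c i ∈ Wrect i) ∧
          appVec papp (ra, rb) j (fun i => c ⟨i.1, lt_of_lt_of_le i.2 hj⟩) = some p := by
    intro j
    induction j with
    | zero =>
      intro hj
      constructor
      · exact hsub ⟨RA, hRAG, RB, hRBH, rfl⟩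
      · intro p hp
        exact ⟨p.1, hp.1, p.2, hp.2, d, hd, by simp [appVec]⟩
    | succ j ih =>
      intro hj
      have hjk : j < k + 1 := hj
      obtain ⟨hmem, hchar⟩ := ih (le_of_lt hjk)
      have step : ∀ p ∈ chain papp (RA ×ˢ RB) Wn j, ∀ q ∈ Wn j,
          ∃ ra ∈ RA, ∃ rb ∈ RB, ∃ c' : Fin (k + 1) → A × B, (∀ i, c' i ∈ Wrect i) ∧
            appVec papp (ra, rb) (j + 1) (fun i => c' ⟨i.1, lt_of_lt_of_le i.2 hj⟩)
              = papp p q ∧ (papp p q).isSome := by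
        intro p hp q hq
        obtain ⟨ra, hra, rb, hrb, c, hc, happ⟩ := hchar p hp
        rw [hWneq j hjk] at hq
        set c' : Fin (k + 1) → A × B := fun i => if i.1 = j then q else c i with hc'def
        have hc' : ∀ i, c' i ∈ Wrect i := by
          intro i
          rw [hc'def]; dsimp only
          split
          · next h => exact (Fin.ext h : i = ⟨j, hjk⟩) ▸ hq
          · exact hc i
        have hlast : c' ⟨j, hjk⟩ = q := by simp [hc'def]
        have hprefix : (fun i : Fin j =>
            (fun i : Fin (j + 1) => c' ⟨i.1, lt_of_lt_of_le i.2 hj⟩) i.castSucc)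
            = (fun i : Fin j => c ⟨i.1, lt_of_lt_of_le i.2 (le_of_lt hjk)⟩) := by
          funext i
          show c' ⟨i.1, _⟩ = c ⟨i.1, _⟩
          rw [hc'def]; dsimp only
          rw [if_neg (Nat.ne_of_lt i.2)]
        have hval : appVec papp (ra, rb) (j + 1)
            (fun i => c' ⟨i.1, lt_of_lt_of_le i.2 hj⟩) = papp p q := by
          rw [appVec_succ, hprefix, happ]
          show papp p (c' ⟨j, hjk⟩) = papp p q
          rw [hlast]
        -- coordinatewise definedness
        obtain ⟨hA, hB⟩ := appVec_prod_eq_some appA appB (ra, rb) j _ p happ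
        have hsomeA : (appA p.1 q.1).isSome := by
          obtain ⟨u, -, hfu⟩ := fullA ra hra (fun i => (c' i).1) (fun i => (hc' i).1)
          have h1 : (appVec appA ra (j + 1)
              (fun i : Fin (j + 1) => (c' ⟨i.1, lt_of_lt_of_le i.2 hj⟩).1)).isSome :=
            appVec_isSome_le appA ra (k + 1) (fun i => (c' i).1) (j + 1) hj
              (by rw [hfu]; rfl)
          have hpre1 : (fun i : Fin j =>
              (fun i : Fin (j + 1) => (c' ⟨i.1, lt_of_lt_of_le i.2 hj⟩).1) i.castSucc)
              = (fun i : Fin j => ((c ⟨i.1, lt_of_lt_of_le i.2 (le_of_lt hjk)⟩) : A × B).1) := by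
            funext i
            exact congrArg Prod.fst (congrFun hprefix i)
          have hvalA : appVec appA ra (j + 1)
              (fun i : Fin (j + 1) => (c' ⟨i.1, lt_of_lt_of_le i.2 hj⟩).1)
              = appA p.1 q.1 := by
            rw [appVec_succ, hpre1, hA, Option.bind_some]
            show appA p.1 (c' ⟨j, hjk⟩).1 = appA p.1 q.1
            rw [hlast]
          rw [hvalA] at h1
          exact h1
        have hsomeB : (appB p.2 q.2).isSome := by
          obtain ⟨v, -, hfv⟩ := fullB rb hrb (fun i => (c' i).2) (fun i => (hc' i).2)
          have h1 : (appVec appB rb (j + 1)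
              (fun i : Fin (j + 1) => (c' ⟨i.1, lt_of_lt_of_le i.2 hj⟩).2)).isSome :=
            appVec_isSome_le appB rb (k + 1) (fun i => (c' i).2) (j + 1) hj
              (by rw [hfv]; rfl)
          have hpre1 : (fun i : Fin j =>
              (fun i : Fin (j + 1) => (c' ⟨i.1, lt_of_lt_of_le i.2 hj⟩).2) i.castSucc)
              = (fun i : Fin j => ((c ⟨i.1, lt_of_lt_of_le i.2 (le_of_lt hjk)⟩) : A × B).2) := by
            funext i
            exact congrArg Prod.snd (congrFun hprefix i)
          have hvalB : appVec appB rb (j + 1)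
              (fun i : Fin (j + 1) => (c' ⟨i.1, lt_of_lt_of_le i.2 hj⟩).2)
              = appB p.2 q.2 := by
            rw [appVec_succ, hpre1, hB, Option.bind_some]
            show appB p.2 (c' ⟨j, hjk⟩).2 = appB p.2 q.2
            rw [hlast]
          rw [hvalB] at h1
          exact h1
        have hsome : (papp p q).isSome := by
          obtain ⟨x, hx⟩ := Option.isSome_iff_exists.mp hsomeA
          obtain ⟨y, hy⟩ := Option.isSome_iff_exists.mp hsomeB
          rw [hpapp]
          simp [prodApp, hx, hy]
        exact ⟨ra, hra, rb, hrb, c', hc', hval, hsome⟩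
      have hdef : SubDef papp (chain papp (RA ×ˢ RB) Wn j) (Wn j) := by
        intro p hp q hq
        obtain ⟨ra, -, rb, -, c', -, -, hsome⟩ := step p hp q hq
        exact hsome
      constructor
      · show SubApp papp _ _ ∈ ψ
        refine hfil.appClosed _ hmem _ ?_ hdef
        rw [hWneq j hjk]
        exact hsub (hWmem _)
      · rintro p' ⟨p, hp, q, hq, hpq⟩
        obtain ⟨ra, hra, rb, hrb, c', hc', hval, -⟩ := step p hp q hq
        exact ⟨ra, hra, rb, hrb, c', hc', by rw [hval]; exact hpq⟩
  obtain ⟨hmemF, hcharF⟩ := key (k + 1) le_rfl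
  refine hfil.upward _ hmemF _ ?_
  intro p hp
  obtain ⟨ra, hra, rb, hrb, c, hc, happ⟩ := hcharF p hp
  have hceq : (fun i : Fin (k + 1) => c ⟨i.1, lt_of_lt_of_le i.2 le_rfl⟩) = c :=
    funext fun i => congrArg c (Fin.ext rfl)
  rw [hceq] at happ
  obtain ⟨hA, hB⟩ := appVec_prod_eq_some appA appB (ra, rb) (k + 1) c p happ
  obtain ⟨u, huU, hu⟩ := fullA ra hra (fun i => (c i).1) (fun i => (hc i).1)
  obtain ⟨v, hvV, hv⟩ := fullB rb hrb (fun i => (c i).2) (fun i => (hc i).2)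
  have h1 : p.1 = u := by
    have := hA.symm.trans hu
    exact Option.some_injective _ this
  have h2 : p.2 = v := by
    have := hB.symm.trans hv
    exact Option.some_injective _ this
  exact ⟨h1 ▸ huU, h2 ▸ hvV⟩

/-- For combinatorially complete sets `G`, `H` of nonempty subsets of PASs
`A`, `B`, the filters `⟨⟨G⟩ × ⟨H⟩⟩` and `⟨G × H⟩` on the product PAS `A × B` coincide. -/
theorem statement6 (A B : Type) (hA : Nonempty A) (hB : Nonempty B)
    (appA : PApp A) (appB : PApp B) (G : Set (Set A)) (H : Set (Set B))
    (hGne : ∀ U ∈ G, U.Nonempty) (hHne : ∀ V ∈ H, V.Nonempty)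
    (hG : CombComplete appA G) (hH : CombComplete appB H) :
    genFilter (prodApp appA appB) (prodFiltSet (genFilter appA G) (genFilter appB H)) =
      genFilter (prodApp appA appB) (prodFiltSet G H) := by
  have hGHne : ∀ W ∈ prodFiltSet G H, W.Nonempty := by
    rintro W ⟨U, hU, V, hV, rfl⟩
    exact (hGne U hU).prod (hHne V hV)
  have hGHne' : ∀ W ∈ prodFiltSet (genFilter appA G) (genFilter appB H), W.Nonempty := by
    rintro W ⟨U, hU, V, hV, rfl⟩
    exact (genFilter_nonempty hGne hU).prod (genFilter_nonempty hHne hV)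
  apply Set.Subset.antisymm
  · refine genFilter_le (isFilter_genFilter hGHne) ?_
    rintro W ⟨U, hU, V, hV, rfl⟩
    exact rect_mem_genFilter appA appB hGne hHne hG hH hU hV
  · refine genFilter_le (isFilter_genFilter hGHne') ?_
    rintro W ⟨U, hU, V, hV, rfl⟩
    exact subset_genFilter _ _
      ⟨U, subset_genFilter _ _ hU, V, subset_genFilter _ _ hV, rfl⟩

end PcaPaper
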